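/- arXiv:1306.1710 — 4 statements merged into one kernel-verified Lean document; each statement's English description precedes it below -/
import Mathlib

section
/- Let μ and ν be two probability measures supported in a bounded interval K of length |K|. Then the 1-Wasserstein distance satisfies W₁(μ, ν) ≤ max(1, |K|/2) · ρ_F(μ, ν), where ρ_F is the flat metric. -/
open MeasureTheory

noncomputable def flatDist (μ ν : Measure ℝ) : ℝ :=
  sSup {r : ℝ | ∃ φ : ℝ → ℝ, LipschitzWith 1 φ ∧ (∀ x, |φ x| ≤ 1) ∧
    r = ∫ x, φ x ∂μ - ∫ x, φ x ∂ν}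

/-- The 1-Wasserstein distance via Kantorovich–Rubinstein duality. -/
noncomputable def W1 (μ ν : Measure ℝ) : ℝ :=
  sSup {r : ℝ | ∃ φ : ℝ → ℝ, LipschitzWith 1 φ ∧
    r = ∫ x, φ x ∂μ - ∫ x, φ x ∂ν}

lemma flatSet_bddAbove (μ ν : Measure ℝ) [IsProbabilityMeasure μ] [IsProbabilityMeasure ν] :
    BddAbove {r : ℝ | ∃ φ : ℝ → ℝ, LipschitzWith 1 φ ∧ (∀ x, |φ x| ≤ 1) ∧
      r = ∫ x, φ x ∂μ - ∫ x, φ x ∂ν} := by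
  refine ⟨2, ?_⟩
  rintro r ⟨φ, hφ, hb, rfl⟩
  have h1 : ‖∫ x, φ x ∂μ‖ ≤ 1 * (μ Set.univ).toReal :=
    norm_integral_le_of_norm_le_const (Filter.Eventually.of_forall fun x => by
      simpa using hb x)
  have h2 : ‖∫ x, φ x ∂ν‖ ≤ 1 * (ν Set.univ).toReal :=
    norm_integral_le_of_norm_le_const (Filter.Eventually.of_forall fun x => by
      simpa using hb x)
  simp [measure_univ, Real.norm_eq_abs] at h1 h2
  have := abs_le.1 h1
  have := abs_le.1 h2
  linarith [abs_le.1 h1, abs_le.1 h2]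

lemma flatDist_nonneg (μ ν : Measure ℝ) [IsProbabilityMeasure μ] [IsProbabilityMeasure ν] :
    0 ≤ flatDist μ ν := by
  apply le_csSup (flatSet_bddAbove μ ν)
  exact ⟨fun _ => 0, LipschitzWith.const' 0, fun x => by simp, by simp⟩

/-- For probability measures supported in a bounded interval K = [k₁, k₂],
W₁(μ, ν) ≤ max(1, |K|/2) · ρ_F(μ, ν). -/
theorem W1_le_flatDist (k₁ k₂ : ℝ) (hk : k₁ ≤ k₂)
    (μ ν : Measure ℝ) [IsProbabilityMeasure μ] [IsProbabilityMeasure ν]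
    (hμ : μ (Set.Icc k₁ k₂)ᶜ = 0) (hν : ν (Set.Icc k₁ k₂)ᶜ = 0) :
    W1 μ ν ≤ max 1 ((k₂ - k₁) / 2) * flatDist μ ν := by
  set c : ℝ := max 1 ((k₂ - k₁) / 2) with hcdef
  have hc1 : (1 : ℝ) ≤ c := le_max_left _ _
  have hc0 : (0 : ℝ) < c := lt_of_lt_of_le one_pos hc1
  have hrhs : 0 ≤ c * flatDist μ ν :=
    mul_nonneg (le_of_lt hc0) (flatDist_nonneg μ ν)
  apply Real.sSup_le _ hrhs
  rintro r ⟨φ, hφ, rfl⟩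
  set m : ℝ := (k₁ + k₂) / 2 with hmdef
  set ψ : ℝ → ℝ := fun x => max (-1) (min 1 ((φ x - φ m) / c)) with hψdef
  -- ψ is 1-Lipschitz
  have hψlip : LipschitzWith 1 ψ := by
    apply LipschitzWith.of_dist_le_mul
    intro x y
    simp only [Real.dist_eq, NNReal.coe_one, one_mul, hψdef]
    calc |max (-1) (min 1 ((φ x - φ m) / c)) - max (-1) (min 1 ((φ y - φ m) / c))|
        ≤ max |(-1 : ℝ) - (-1)| |min 1 ((φ x - φ m) / c) - min 1 ((φ y - φ m) / c)| :=
          abs_max_sub_max_le_max _ _ _ _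
      _ ≤ max |(-1 : ℝ) - (-1)| (max |(1:ℝ) - 1| |(φ x - φ m) / c - (φ y - φ m) / c|) := by
          gcongr
          exact abs_min_sub_min_le_max _ _ _ _
      _ ≤ |x - y| := by
          simp only [sub_self, abs_zero, max_le_iff]
          refine ⟨abs_nonneg _, abs_nonneg _, ?_⟩
          rw [div_sub_div_same, abs_div, abs_of_pos hc0]
          calc |φ x - φ m - (φ y - φ m)| / c ≤ |φ x - φ y| / 1 := by
                rw [show φ x - φ m - (φ y - φ m) = φ x - φ y by ring]
                exact div_le_div_of_nonneg_left (abs_nonneg _) one_pos hc1 |>.trans le_rfl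
            _ = |φ x - φ y| := div_one _
            _ ≤ |x - y| := by
                have := hφ.dist_le_mul x y
                simpa [Real.dist_eq] using this
  have hψbd : ∀ x, |ψ x| ≤ 1 := by
    intro x
    rw [abs_le]
    constructor
    · exact le_max_left _ _
    · exact max_le (by norm_num) (min_le_left _ _)
  -- on Icc, ψ = (φ - φ m)/c
  have hψeq : ∀ x ∈ Set.Icc k₁ k₂, ψ x = (φ x - φ m) / c := by
    intro x hx
    have hxm : |x - m| ≤ (k₂ - k₁) / 2 := by
      rw [abs_le]; constructor <;> [skip; skip] <;>
        · simp only [hmdef]; cases hx; linarith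
    have h1 : |φ x - φ m| ≤ (k₂ - k₁) / 2 := by
      have := hφ.dist_le_mul x m
      simp only [Real.dist_eq, NNReal.coe_one, one_mul] at this
      exact this.trans hxm
    have h2 : |(φ x - φ m) / c| ≤ 1 := by
      rw [abs_div, abs_of_pos hc0, div_le_one hc0]
      exact h1.trans (le_max_right _ _)
    rw [abs_le] at h2
    simp only [hψdef]
    rw [min_eq_right h2.2, max_eq_right h2.1]
  have hμae : ∀ᵐ x ∂μ, x ∈ Set.Icc k₁ k₂ := by
    rw [MeasureTheory.ae_iff]; exact hμ
  have hνae : ∀ᵐ x ∂ν, x ∈ Set.Icc k₁ k₂ := by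
    rw [MeasureTheory.ae_iff]; exact hν
  -- integrability of φ
  have hintμ : Integrable φ μ := by
    rw [← Measure.restrict_eq_self_of_ae_mem hμae]
    exact ContinuousOn.integrableOn_compact isCompact_Icc hφ.continuous.continuousOn
  have hintν : Integrable φ ν := by
    rw [← Measure.restrict_eq_self_of_ae_mem hνae]
    exact ContinuousOn.integrableOn_compact isCompact_Icc hφ.continuous.continuousOn
  have keyμ : ∫ x, ψ x ∂μ = (∫ x, φ x ∂μ - φ m) / c := by
    have : ∫ x, ψ x ∂μ = ∫ x, (φ x - φ m) / c ∂μ := by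
      apply integral_congr_ae
      filter_upwards [hμae] with x hx using hψeq x hx
    rw [this]
    rw [integral_div, integral_sub hintμ (integrable_const _), integral_const]
    simp [measure_univ]
  have keyν : ∫ x, ψ x ∂ν = (∫ x, φ x ∂ν - φ m) / c := by
    have : ∫ x, ψ x ∂ν = ∫ x, (φ x - φ m) / c ∂ν := by
      apply integral_congr_ae
      filter_upwards [hνae] with x hx using hψeq x hx
    rw [this]
    rw [integral_div, integral_sub hintν (integrable_const _), integral_const]
    simp [measure_univ]
  have hmem : (∫ x, ψ x ∂μ - ∫ x, ψ x ∂ν) ≤ flatDist μ ν :=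
    le_csSup (flatSet_bddAbove μ ν) ⟨ψ, hψlip, hψbd, rfl⟩
  have heq : ∫ x, φ x ∂μ - ∫ x, φ x ∂ν = c * (∫ x, ψ x ∂μ - ∫ x, ψ x ∂ν) := by
    rw [keyμ, keyν]
    field_simp
    ring
  rw [heq]
  exact mul_le_mul_of_nonneg_left hmem (le_of_lt hc0)
end

section
/- Let μ₁, μ₂ be finite nonnegative Radon measures with positive masses M₁, M₂, both supported in a bounded interval K, and let μ̃ᵢ = μᵢ/Mᵢ. Define ρ(μ₁,μ₂) = min(M₁,M₂) · W₁(μ̃₁,μ̃₂) + |M₁ - M₂|. Then ρ(μ₁, μ₂) ≤ 3 max(1, |K|/2) · ρ_F(μ₁, μ₂); equivalently, (1/3) min(1, 2/|K|) ρ(μ₁,μ₂) ≤ ρ_F(μ₁,μ₂). -/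
open MeasureTheory

/-- For finite nonnegative measures with positive masses supported in a bounded
interval K, the quantity ρ(μ₁,μ₂) = min(M₁,M₂) W₁(μ̃₁,μ̃₂) + |M₁-M₂| satisfies
ρ(μ₁,μ₂) ≤ 3 max(1,|K|/2) ρ_F(μ₁,μ₂). -/
theorem rho_le_flatDist (k₁ k₂ : ℝ) (hk : k₁ ≤ k₂) (μ₁ μ₂ : Measure ℝ)
    [IsFiniteMeasure μ₁] [IsFiniteMeasure μ₂]
    (hs1 : μ₁ (Set.Icc k₁ k₂)ᶜ = 0) (hs2 : μ₂ (Set.Icc k₁ k₂)ᶜ = 0)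
    (hM1 : 0 < (μ₁ Set.univ).toReal) (hM2 : 0 < (μ₂ Set.univ).toReal) :
    min (μ₁ Set.univ).toReal (μ₂ Set.univ).toReal *
        W1 ((μ₁ Set.univ)⁻¹ • μ₁) ((μ₂ Set.univ)⁻¹ • μ₂) +
      |(μ₁ Set.univ).toReal - (μ₂ Set.univ).toReal| ≤
      3 * max 1 ((k₂ - k₁) / 2) * flatDist μ₁ μ₂ := by
  set M₁ : ℝ := (μ₁ Set.univ).toReal with hM₁def
  set M₂ : ℝ := (μ₂ Set.univ).toReal with hM₂def
  set D : ℝ := (k₂ - k₁) / 2 with hDdef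
  set C : ℝ := max 1 D with hCdef
  have hD0 : 0 ≤ D := by rw [hDdef]; linarith
  have hC1 : (1:ℝ) ≤ C := le_max_left _ _
  have hDC : D ≤ C := le_max_right _ _
  have hC0 : (0:ℝ) < C := lt_of_lt_of_le one_pos hC1
  set F : ℝ := flatDist μ₁ μ₂ with hFdef
  -- the flatDist set is bounded above
  have hbdd : BddAbove {r : ℝ | ∃ φ : ℝ → ℝ, LipschitzWith 1 φ ∧ (∀ x, |φ x| ≤ 1) ∧
      r = ∫ x, φ x ∂μ₁ - ∫ x, φ x ∂μ₂} := by
    refine ⟨M₁ + M₂, ?_⟩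
    rintro r ⟨φ, hL, hb, rfl⟩
    have h1 : |∫ x, φ x ∂μ₁| ≤ 1 * M₁ := by
      rw [← Real.norm_eq_abs]
      exact norm_integral_le_of_norm_le_const (ae_of_all _ fun x => by
        rw [Real.norm_eq_abs]; exact hb x)
    have h2 : |∫ x, φ x ∂μ₂| ≤ 1 * M₂ := by
      rw [← Real.norm_eq_abs]
      exact norm_integral_le_of_norm_le_const (ae_of_all _ fun x => by
        rw [Real.norm_eq_abs]; exact hb x)
    rcases abs_le.mp h1 with ⟨a, b⟩
    rcases abs_le.mp h2 with ⟨e, d⟩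
    linarith
  -- any admissible test function bounds flatDist from below
  have hmem : ∀ φ : ℝ → ℝ, LipschitzWith 1 φ → (∀ x, |φ x| ≤ 1) →
      (∫ x, φ x ∂μ₁ - ∫ x, φ x ∂μ₂) ≤ F := by
    intro φ hL hb
    exact le_csSup hbdd ⟨φ, hL, hb, rfl⟩
  have hF0 : 0 ≤ F := by
    have := hmem (fun _ => 0) (LipschitzWith.const' 0) (fun x => by norm_num)
    simpa using this
  -- mass difference is bounded by flatDist
  have hmass : |M₁ - M₂| ≤ F := by
    rcases abs_cases (M₁ - M₂) with ⟨h, _⟩ | ⟨h, _⟩ <;> rw [h]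
    · have := hmem (fun _ => 1) (LipschitzWith.const' 1) (fun x => by norm_num)
      simp only [integral_const, smul_eq_mul, mul_one] at this
      exact this
    · have := hmem (fun _ => -1) (LipschitzWith.const' (-1)) (fun x => by norm_num)
      simp only [integral_const, smul_eq_mul] at this
      change M₁ * -1 - M₂ * -1 ≤ F at this
      linarith
  have hM1ne : M₁ ≠ 0 := ne_of_gt hM1
  have hM2ne : M₂ ≠ 0 := ne_of_gt hM2
  -- key bound for every element of the W1 set
  have hW1 : ∀ r ∈ {r : ℝ | ∃ φ : ℝ → ℝ, LipschitzWith 1 φ ∧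
      r = ∫ x, φ x ∂((μ₁ Set.univ)⁻¹ • μ₁) - ∫ x, φ x ∂((μ₂ Set.univ)⁻¹ • μ₂)},
      min M₁ M₂ * r ≤ 2 * C * F := by
    rintro r ⟨φ, hL, rfl⟩
    set mid : ℝ := (k₁ + k₂) / 2 with hmiddef
    set c : ℝ := φ mid with hcdef
    set ψ : ℝ → ℝ := fun x => max (min (φ x - c) D) (-D) with hψdef
    have hφc : LipschitzWith 1 (fun x => φ x - c) := by
      have := hL.sub (LipschitzWith.const (α := ℝ) c)
      simpa using this
    have hψL : LipschitzWith 1 ψ := (hφc.min_const D).max_const (-D)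
    have hψb : ∀ x, |ψ x| ≤ D := by
      intro x
      rw [abs_le]
      exact ⟨le_max_right _ _, max_le (min_le_right _ _) (by linarith)⟩
    have hψK : ∀ x ∈ Set.Icc k₁ k₂, ψ x = φ x - c := by
      intro x hx
      have hdist : |φ x - c| ≤ |x - mid| := by
        have := hL.dist_le_mul x mid
        simpa [Real.dist_eq, hcdef] using this
      have hxmid : |x - mid| ≤ D := by
        rw [abs_le]
        rcases hx with ⟨h1, h2⟩
        constructor <;> rw [hmiddef, hDdef] at * <;> linarith
      rcases abs_le.mp (le_trans hdist hxmid) with ⟨h1, h2⟩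
      simp [hψdef, min_eq_left h2, max_eq_left h1]
    have hψcont : Continuous ψ := hψL.continuous
    have hψint1 : Integrable ψ μ₁ :=
      (integrable_const D).mono' hψcont.aestronglyMeasurable
        (ae_of_all _ fun x => by simpa [Real.norm_eq_abs] using hψb x)
    have hψint2 : Integrable ψ μ₂ :=
      (integrable_const D).mono' hψcont.aestronglyMeasurable
        (ae_of_all _ fun x => by simpa [Real.norm_eq_abs] using hψb x)
    set A₁ : ℝ := ∫ x, ψ x ∂μ₁ with hA₁def
    set A₂ : ℝ := ∫ x, ψ x ∂μ₂ with hA₂def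
    have hA1b : |A₁| ≤ D * M₁ := by
      rw [← Real.norm_eq_abs]
      exact norm_integral_le_of_norm_le_const (ae_of_all _ fun x => by
        rw [Real.norm_eq_abs]; exact hψb x)
    have hA2b : |A₂| ≤ D * M₂ := by
      rw [← Real.norm_eq_abs]
      exact norm_integral_le_of_norm_le_const (ae_of_all _ fun x => by
        rw [Real.norm_eq_abs]; exact hψb x)
    have hA1b' : |A₁| ≤ C * M₁ :=
      le_trans hA1b (mul_le_mul_of_nonneg_right hDC (le_of_lt hM1))
    have hA2b' : |A₂| ≤ C * M₂ :=
      le_trans hA2b (mul_le_mul_of_nonneg_right hDC (le_of_lt hM2))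
    -- the rescaled truncation is admissible for flatDist
    have hkey : A₁ - A₂ ≤ C * F := by
      set g : ℝ → ℝ := fun x => C⁻¹ * ψ x with hgdef
      have hCinvpos : (0:ℝ) < C⁻¹ := inv_pos.mpr hC0
      have hgL : LipschitzWith 1 g := by
        apply LipschitzWith.of_dist_le_mul
        intro x y
        have h := hψL.dist_le_mul x y
        simp only [Real.dist_eq, NNReal.coe_one, one_mul] at h
        rw [Real.dist_eq, Real.dist_eq]
        simp only [NNReal.coe_one, one_mul]
        have h1 : |g x - g y| = C⁻¹ * |ψ x - ψ y| := by
          rw [hgdef]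
          simp only
          rw [← mul_sub, abs_mul, abs_of_pos hCinvpos]
        rw [h1]
        have hCinv : C⁻¹ ≤ 1 := by
          rw [inv_le_one_iff₀]; right; exact hC1
        calc C⁻¹ * |ψ x - ψ y| ≤ C⁻¹ * |x - y| :=
              mul_le_mul_of_nonneg_left h (le_of_lt hCinvpos)
          _ ≤ 1 * |x - y| := mul_le_mul_of_nonneg_right hCinv (abs_nonneg _)
          _ = |x - y| := one_mul _
      have hgb : ∀ x, |g x| ≤ 1 := by
        intro x
        have h1 : |g x| = C⁻¹ * |ψ x| := by
          rw [hgdef]; simp only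
          rw [abs_mul, abs_of_pos hCinvpos]
        rw [h1]
        calc C⁻¹ * |ψ x| ≤ C⁻¹ * D :=
              mul_le_mul_of_nonneg_left (hψb x) (le_of_lt hCinvpos)
          _ ≤ C⁻¹ * C := mul_le_mul_of_nonneg_left hDC (le_of_lt hCinvpos)
          _ = 1 := inv_mul_cancel₀ (ne_of_gt hC0)
      have hg := hmem g hgL hgb
      have hgi1 : ∫ x, g x ∂μ₁ = C⁻¹ * A₁ := by
        rw [hgdef, hA₁def]; exact integral_const_mul _ _
      have hgi2 : ∫ x, g x ∂μ₂ = C⁻¹ * A₂ := by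
        rw [hgdef, hA₂def]; exact integral_const_mul _ _
      rw [hgi1, hgi2] at hg
      have h2 := mul_le_mul_of_nonneg_left hg (le_of_lt hC0)
      calc A₁ - A₂ = C * (C⁻¹ * A₁ - C⁻¹ * A₂) := by
            field_simp
        _ ≤ C * F := h2
    -- compute the normalized integrals
    have hae1 : φ =ᵐ[μ₁] fun x => ψ x + c := by
      rw [Filter.eventuallyEq_iff_exists_mem]
      refine ⟨Set.Icc k₁ k₂, ?_, fun x hx => by show φ x = ψ x + c; rw [hψK x hx]; ring⟩
      rw [mem_ae_iff]
      exact hs1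
    have hae2 : φ =ᵐ[μ₂] fun x => ψ x + c := by
      rw [Filter.eventuallyEq_iff_exists_mem]
      refine ⟨Set.Icc k₁ k₂, ?_, fun x hx => by show φ x = ψ x + c; rw [hψK x hx]; ring⟩
      rw [mem_ae_iff]
      exact hs2
    have hn1 : ∫ x, φ x ∂((μ₁ Set.univ)⁻¹ • μ₁) = M₁⁻¹ * (A₁ + c * M₁) := by
      rw [integral_congr_ae (Measure.ae_smul_measure hae1 _), integral_smul_measure,
        ENNReal.toReal_inv, integral_add hψint1 (integrable_const c), integral_const]
      rw [smul_eq_mul, smul_eq_mul]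
      simp only [measureReal_def]
      ring
    have hn2 : ∫ x, φ x ∂((μ₂ Set.univ)⁻¹ • μ₂) = M₂⁻¹ * (A₂ + c * M₂) := by
      rw [integral_congr_ae (Measure.ae_smul_measure hae2 _), integral_smul_measure,
        ENNReal.toReal_inv, integral_add hψint2 (integrable_const c), integral_const]
      rw [smul_eq_mul, smul_eq_mul]
      simp only [measureReal_def]
      ring
    rw [hn1, hn2]
    have hsimp : M₁⁻¹ * (A₁ + c * M₁) - M₂⁻¹ * (A₂ + c * M₂)
        = M₁⁻¹ * A₁ - M₂⁻¹ * A₂ := by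
      field_simp
      ring
    rw [hsimp]
    rcases le_total M₁ M₂ with hle | hle
    · rw [min_eq_left hle]
      have e1 : M₁ * (M₁⁻¹ * A₁ - M₂⁻¹ * A₂)
          = (A₁ - A₂) + ((M₂ - M₁) / M₂) * A₂ := by
        field_simp
        ring
      rw [e1]
      have h2 : ((M₂ - M₁) / M₂) * A₂ ≤ ((M₂ - M₁) / M₂) * (C * M₂) := by
        apply mul_le_mul_of_nonneg_left _ (div_nonneg (by linarith) (le_of_lt hM2))
        exact le_trans (le_abs_self _) hA2b'
      have h3 : ((M₂ - M₁) / M₂) * (C * M₂) = C * (M₂ - M₁) := by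
        field_simp
      have h4 : M₂ - M₁ ≤ F := by
        rw [abs_sub_comm] at hmass
        exact le_trans (le_abs_self _) hmass
      have h5 : C * (M₂ - M₁) ≤ C * F := mul_le_mul_of_nonneg_left h4 (le_of_lt hC0)
      linarith
    · rw [min_eq_right hle]
      have e1 : M₂ * (M₁⁻¹ * A₁ - M₂⁻¹ * A₂)
          = (A₁ - A₂) + ((M₂ - M₁) / M₁) * A₁ := by
        field_simp
        ring
      rw [e1]
      have h2 : ((M₂ - M₁) / M₁) * A₁ ≤ ((M₁ - M₂) / M₁) * (C * M₁) := by
        have hnegA : -(C * M₁) ≤ A₁ := neg_le_of_abs_le hA1b'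
        have hq : 0 ≤ (M₁ - M₂) / M₁ := div_nonneg (by linarith) (le_of_lt hM1)
        have : ((M₂ - M₁) / M₁) * A₁ = ((M₁ - M₂) / M₁) * (-A₁) := by ring
        rw [this]
        apply mul_le_mul_of_nonneg_left _ hq
        linarith
      have h3 : ((M₁ - M₂) / M₁) * (C * M₁) = C * (M₁ - M₂) := by
        field_simp
      have h4 : M₁ - M₂ ≤ F := le_trans (le_abs_self _) hmass
      have h5 : C * (M₁ - M₂) ≤ C * F := mul_le_mul_of_nonneg_left h4 (le_of_lt hC0)
      linarith
  -- conclude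
  have hm : (0:ℝ) < min M₁ M₂ := lt_min hM1 hM2
  have hne : (0:ℝ) ∈ {r : ℝ | ∃ φ : ℝ → ℝ, LipschitzWith 1 φ ∧
      r = ∫ x, φ x ∂((μ₁ Set.univ)⁻¹ • μ₁) - ∫ x, φ x ∂((μ₂ Set.univ)⁻¹ • μ₂)} :=
    ⟨fun _ => 0, LipschitzWith.const' 0, by simp⟩
  have hW1le : W1 ((μ₁ Set.univ)⁻¹ • μ₁) ((μ₂ Set.univ)⁻¹ • μ₂)
      ≤ 2 * C * F / min M₁ M₂ := by
    apply csSup_le ⟨0, hne⟩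
    intro r hr
    rw [le_div_iff₀ hm]
    rw [mul_comm]
    exact hW1 r hr
  have hfin : min M₁ M₂ * W1 ((μ₁ Set.univ)⁻¹ • μ₁) ((μ₂ Set.univ)⁻¹ • μ₂)
      ≤ 2 * C * F := by
    have := mul_le_mul_of_nonneg_left hW1le (le_of_lt hm)
    calc min M₁ M₂ * W1 ((μ₁ Set.univ)⁻¹ • μ₁) ((μ₂ Set.univ)⁻¹ • μ₂)
        ≤ min M₁ M₂ * (2 * C * F / min M₁ M₂) := this
      _ = 2 * C * F := by
          rw [mul_comm, div_mul_cancel₀ _ (ne_of_gt hm)]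
  have hCF : F ≤ C * F := by
    calc F = 1 * F := (one_mul F).symm
      _ ≤ C * F := mul_le_mul_of_nonneg_right hC1 hF0
  linarith
end

section
/- The quantity ρ(μ₁,μ₂) = min(M₁,M₂)·W₁(μ̃₁,μ̃₂) + |M₁ - M₂| and the flat metric ρ_F are bi-Lipschitz equivalent on the set of nonnegative Radon measures with positive mass supported in a fixed bounded interval K: there is a constant C_K = (1/3)min(1, 2/|K|) > 0 with C_K ρ(μ₁,μ₂) ≤ ρ_F(μ₁,μ₂) ≤ ρ(μ₁,μ₂). -/
open MeasureTheory

lemma ae_mem_of_compl_zero {μ : Measure ℝ} {S : Set ℝ} (h : μ Sᶜ = 0) :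
    ∀ᵐ x ∂μ, x ∈ S := by
  rw [ae_iff]; simpa [Set.compl_def] using h

lemma integrable_of_bound_on {μ : Measure ℝ} [IsFiniteMeasure μ] {S : Set ℝ}
    (hS : μ Sᶜ = 0) {φ : ℝ → ℝ} (hφ : Continuous φ) {C : ℝ}
    (hC : ∀ x ∈ S, |φ x| ≤ C) : Integrable φ μ :=
  (integrable_const C).mono' hφ.aestronglyMeasurable
    ((ae_mem_of_compl_zero hS).mono fun x hx => by simpa using hC x hx)

lemma abs_integral_le_of_bound_on {μ : Measure ℝ} [IsFiniteMeasure μ] {S : Set ℝ}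
    (hS : μ Sᶜ = 0) {φ : ℝ → ℝ} {C : ℝ}
    (hC : ∀ x ∈ S, |φ x| ≤ C) : |∫ x, φ x ∂μ| ≤ C * (μ Set.univ).toReal := by
  have := norm_integral_le_of_norm_le_const (μ := μ) (f := φ) (C := C)
    ((ae_mem_of_compl_zero hS).mono fun x hx => by simpa using hC x hx)
  simpa [measureReal_def] using this

lemma lip_pointwise {k₁ k₂ : ℝ} {φ : ℝ → ℝ} (hlip : LipschitzWith 1 φ) {x : ℝ}
    (hx : x ∈ Set.Icc k₁ k₂) : |φ x - φ ((k₁+k₂)/2)| ≤ (k₂-k₁)/2 := by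
  have h := hlip.dist_le_mul x ((k₁+k₂)/2)
  rw [Real.dist_eq, Real.dist_eq] at h
  obtain ⟨h1, h2⟩ := hx
  have : |x - (k₁+k₂)/2| ≤ (k₂-k₁)/2 := abs_le.2 ⟨by linarith, by linarith⟩
  calc |φ x - φ ((k₁+k₂)/2)| ≤ 1 * |x - (k₁+k₂)/2| := h
    _ ≤ (k₂-k₁)/2 := by linarith

lemma shift_int_bound {ν : Measure ℝ} [IsProbabilityMeasure ν] {k₁ k₂ : ℝ}
    (hν : ν (Set.Icc k₁ k₂)ᶜ = 0) {φ : ℝ → ℝ} (hlip : LipschitzWith 1 φ) :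
    Integrable φ ν ∧ |∫ x, φ x ∂ν - φ ((k₁+k₂)/2)| ≤ (k₂-k₁)/2 := by
  have hbd : ∀ x ∈ Set.Icc k₁ k₂, |φ x| ≤ |φ ((k₁+k₂)/2)| + (k₂-k₁)/2 := by
    intro x hx
    have := lip_pointwise hlip hx
    have := abs_sub_abs_le_abs_sub (φ x) (φ ((k₁+k₂)/2))
    linarith
  have hint : Integrable φ ν := integrable_of_bound_on hν hlip.continuous hbd
  refine ⟨hint, ?_⟩
  have heq : ∫ x, φ x ∂ν - φ ((k₁+k₂)/2) = ∫ x, (φ x - φ ((k₁+k₂)/2)) ∂ν := by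
    rw [integral_sub hint (integrable_const _), integral_const]
    simp
  rw [heq]
  have := abs_integral_le_of_bound_on hν (φ := fun x => φ x - φ ((k₁+k₂)/2))
    (C := (k₂-k₁)/2) (fun x hx => lip_pointwise hlip hx)
  simpa using this

lemma clamp_lipschitz {φ : ℝ → ℝ} (hlip : LipschitzWith 1 φ) {c s : ℝ} (hs1 : 1 ≤ s) :
    LipschitzWith 1 (fun x => max (-1) (min 1 ((φ x - c)/s))) := by
  have hs0 : (0:ℝ) < s := lt_of_lt_of_le one_pos hs1
  have h0 : LipschitzWith 1 (fun x => (φ x - c)/s) := by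
    apply LipschitzWith.of_dist_le_mul
    intro x y
    have h := hlip.dist_le_mul x y
    rw [Real.dist_eq, Real.dist_eq] at h ⊢
    have he : (φ x - c)/s - (φ y - c)/s = (φ x - φ y)/s := by ring
    rw [he, abs_div, abs_of_pos hs0, div_le_iff₀ hs0]
    norm_num at h ⊢
    nlinarith [abs_nonneg (x - y)]
  have := (LipschitzWith.const' (β := ℝ) (-1 : ℝ) (K := 1)).max
    ((LipschitzWith.const' (β := ℝ) (1 : ℝ) (K := 1)).min h0)
  simpa using this

lemma clamp_bound (φ : ℝ → ℝ) (c s : ℝ) (x : ℝ) :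
    |max (-1) (min 1 ((φ x - c)/s))| ≤ 1 :=
  abs_le.2 ⟨le_max_left _ _, max_le (by norm_num) (min_le_left _ _)⟩

lemma clamp_integral {μ : Measure ℝ} [IsFiniteMeasure μ] {k₁ k₂ : ℝ}
    (hμ : μ (Set.Icc k₁ k₂)ᶜ = 0) {φ : ℝ → ℝ} (hlip : LipschitzWith 1 φ) {s : ℝ}
    (hbs : (k₂-k₁)/2 ≤ s) (hs1 : 1 ≤ s) :
    ∫ x, max (-1) (min 1 ((φ x - φ ((k₁+k₂)/2))/s)) ∂μ
      = (∫ x, φ x ∂μ - (μ Set.univ).toReal * φ ((k₁+k₂)/2))/s := by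
  have hs0 : (0:ℝ) < s := lt_of_lt_of_le one_pos hs1
  set c := φ ((k₁+k₂)/2) with hc
  have hint : Integrable φ μ := by
    apply integrable_of_bound_on hμ hlip.continuous (C := |c| + (k₂-k₁)/2)
    intro x hx
    have h1 := lip_pointwise hlip hx
    have h2 := abs_sub_abs_le_abs_sub (φ x) c
    linarith
  have heq : ∫ x, max (-1) (min 1 ((φ x - c)/s)) ∂μ = ∫ x, (φ x - c)/s ∂μ := by
    apply integral_congr_ae
    filter_upwards [ae_mem_of_compl_zero hμ] with x hx
    have h1 := abs_le.1 (lip_pointwise hlip hx)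
    have hle : (φ x - c)/s ≤ 1 := by rw [div_le_one hs0]; linarith
    have hge : (-1:ℝ) ≤ (φ x - c)/s := by rw [le_div_iff₀ hs0]; nlinarith
    rw [min_eq_right hle, max_eq_right hge]
  rw [heq, integral_div, integral_sub hint (integrable_const c), integral_const,
    smul_eq_mul, measureReal_def]

set_option maxHeartbeats 2000000 in
/-- ρ and ρ_F are bi-Lipschitz equivalent on nonnegative measures with positive
mass supported in a fixed bounded interval K = [k₁,k₂]:
C_K ρ(μ₁,μ₂) ≤ ρ_F(μ₁,μ₂) ≤ ρ(μ₁,μ₂) with C_K = (1/3) min(1, 2/|K|) > 0. -/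
theorem rho_flatDist_equivalent (k₁ k₂ : ℝ) (hk : k₁ < k₂) (μ₁ μ₂ : Measure ℝ)
    [IsFiniteMeasure μ₁] [IsFiniteMeasure μ₂]
    (hs1 : μ₁ (Set.Icc k₁ k₂)ᶜ = 0) (hs2 : μ₂ (Set.Icc k₁ k₂)ᶜ = 0)
    (hM1 : 0 < (μ₁ Set.univ).toReal) (hM2 : 0 < (μ₂ Set.univ).toReal) :
    0 < (1 / 3) * min 1 (2 / (k₂ - k₁)) ∧
    (1 / 3) * min 1 (2 / (k₂ - k₁)) *
        (min (μ₁ Set.univ).toReal (μ₂ Set.univ).toReal *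
          W1 ((μ₁ Set.univ)⁻¹ • μ₁) ((μ₂ Set.univ)⁻¹ • μ₂) +
        |(μ₁ Set.univ).toReal - (μ₂ Set.univ).toReal|) ≤ flatDist μ₁ μ₂ ∧
    flatDist μ₁ μ₂ ≤
      min (μ₁ Set.univ).toReal (μ₂ Set.univ).toReal *
          W1 ((μ₁ Set.univ)⁻¹ • μ₁) ((μ₂ Set.univ)⁻¹ • μ₂) +
        |(μ₁ Set.univ).toReal - (μ₂ Set.univ).toReal| := by
  have hL : (0:ℝ) < k₂ - k₁ := sub_pos.2 hk
  set b : ℝ := (k₂ - k₁)/2 with hbdef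
  have hb : 0 < b := by positivity
  set s : ℝ := max 1 b with hsdef
  have hs1' : (1:ℝ) ≤ s := le_max_left _ _
  have hbs : b ≤ s := le_max_right _ _
  have hspos : (0:ℝ) < s := lt_of_lt_of_le one_pos hs1'
  set M₁ := (μ₁ Set.univ).toReal with hM₁def
  set M₂ := (μ₂ Set.univ).toReal with hM₂def
  have h1ne : μ₁ Set.univ ≠ 0 := by
    intro h; rw [hM₁def, h] at hM1; simp at hM1
  have h2ne : μ₂ Set.univ ≠ 0 := by
    intro h; rw [hM₂def, h] at hM2; simp at hM2
  set ν₁ := (μ₁ Set.univ)⁻¹ • μ₁ with hν₁def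
  set ν₂ := (μ₂ Set.univ)⁻¹ • μ₂ with hν₂def
  haveI hP1 : IsProbabilityMeasure ν₁ := ⟨by
    rw [hν₁def, Measure.smul_apply, smul_eq_mul,
      ENNReal.inv_mul_cancel h1ne (measure_ne_top _ _)]⟩
  haveI hP2 : IsProbabilityMeasure ν₂ := ⟨by
    rw [hν₂def, Measure.smul_apply, smul_eq_mul,
      ENNReal.inv_mul_cancel h2ne (measure_ne_top _ _)]⟩
  have hν₁c : ν₁ (Set.Icc k₁ k₂)ᶜ = 0 := by
    rw [hν₁def, Measure.smul_apply, hs1, smul_eq_mul, mul_zero]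
  have hν₂c : ν₂ (Set.Icc k₁ k₂)ᶜ = 0 := by
    rw [hν₂def, Measure.smul_apply, hs2, smul_eq_mul, mul_zero]
  have hconv1 : ∀ φ : ℝ → ℝ, ∫ x, φ x ∂μ₁ = M₁ * ∫ x, φ x ∂ν₁ := by
    intro φ
    rw [hν₁def, integral_smul_measure, ENNReal.toReal_inv, smul_eq_mul, ← hM₁def,
      ← mul_assoc, mul_inv_cancel₀ hM1.ne', one_mul]
  have hconv2 : ∀ φ : ℝ → ℝ, ∫ x, φ x ∂μ₂ = M₂ * ∫ x, φ x ∂ν₂ := by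
    intro φ
    rw [hν₂def, integral_smul_measure, ENNReal.toReal_inv, smul_eq_mul, ← hM₂def,
      ← mul_assoc, mul_inv_cancel₀ hM2.ne', one_mul]
  set SF := {r : ℝ | ∃ φ : ℝ → ℝ, LipschitzWith 1 φ ∧ (∀ x, |φ x| ≤ 1) ∧
    r = ∫ x, φ x ∂μ₁ - ∫ x, φ x ∂μ₂} with hSFdef
  set SW := {r : ℝ | ∃ φ : ℝ → ℝ, LipschitzWith 1 φ ∧
    r = ∫ x, φ x ∂ν₁ - ∫ x, φ x ∂ν₂} with hSWdef
  have hFdef : flatDist μ₁ μ₂ = sSup SF := rfl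
  have hWdef : W1 ν₁ ν₂ = sSup SW := rfl
  have hSF0 : (0:ℝ) ∈ SF := ⟨fun _ => 0, LipschitzWith.const' 0, by norm_num, by simp⟩
  have hSW0 : (0:ℝ) ∈ SW := ⟨fun _ => 0, LipschitzWith.const' 0, by simp⟩
  have hbddSF : BddAbove SF := by
    refine ⟨M₁ + M₂, fun r hr => ?_⟩
    obtain ⟨φ, hlip, hbd, rfl⟩ := hr
    have h1 := abs_integral_le_of_bound_on (S := Set.univ) (μ := μ₁)
      (by simp) (fun x _ => hbd x)
    have h2 := abs_integral_le_of_bound_on (S := Set.univ) (μ := μ₂)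
      (by simp) (fun x _ => hbd x)
    rw [← hM₁def, one_mul] at h1
    rw [← hM₂def, one_mul] at h2
    linarith [(abs_le.1 h1).2, (abs_le.1 h2).1]
  have hbddSW : BddAbove SW := by
    refine ⟨b + b, fun r hr => ?_⟩
    obtain ⟨φ, hlip, rfl⟩ := hr
    obtain ⟨hint1, hJ1⟩ := shift_int_bound hν₁c hlip
    obtain ⟨hint2, hJ2⟩ := shift_int_bound hν₂c hlip
    rw [← hbdef] at hJ1 hJ2
    linarith [(abs_le.1 hJ1).2, (abs_le.1 hJ2).1]
  have hF0 : (0:ℝ) ≤ sSup SF := le_csSup hbddSF hSF0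
  have hW0 : (0:ℝ) ≤ sSup SW := le_csSup hbddSW hSW0
  have hmem1 : M₁ - M₂ ∈ SF :=
    ⟨fun _ => 1, LipschitzWith.const' 1, by norm_num,
      by simp [integral_const, hM₁def, hM₂def, measureReal_def]⟩
  have hmem2 : M₂ - M₁ ∈ SF :=
    ⟨fun _ => -1, LipschitzWith.const' (-1), by norm_num,
      by simp [integral_const, hM₁def, hM₂def, measureReal_def]; ring⟩
  have hΔF : |M₁ - M₂| ≤ sSup SF :=
    abs_sub_le_iff.2 ⟨le_csSup hbddSF hmem1, le_csSup hbddSF hmem2⟩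
  -- upper bound
  have hupper : sSup SF ≤ min M₁ M₂ * sSup SW + |M₁ - M₂| := by
    apply Real.sSup_le _ (add_nonneg (mul_nonneg (le_min hM1.le hM2.le) hW0)
      (abs_nonneg _))
    rintro r ⟨φ, hlip, hbd, rfl⟩
    have hI1 : |∫ x, φ x ∂ν₁| ≤ 1 := by
      have := abs_integral_le_of_bound_on (μ := ν₁) (S := Set.univ)
        (by simp) (fun x _ => hbd x)
      simpa using this
    have hI2 : |∫ x, φ x ∂ν₂| ≤ 1 := by
      have := abs_integral_le_of_bound_on (μ := ν₂) (S := Set.univ)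
        (by simp) (fun x _ => hbd x)
      simpa using this
    have hWle : ∫ x, φ x ∂ν₁ - ∫ x, φ x ∂ν₂ ≤ sSup SW :=
      le_csSup hbddSW ⟨φ, hlip, rfl⟩
    rw [hconv1 φ, hconv2 φ]
    rcases le_total M₁ M₂ with h | h
    · rw [min_eq_left h]
      have habs : M₂ - M₁ ≤ |M₁ - M₂| := by
        rw [abs_sub_comm]; exact le_abs_self _
      nlinarith [(abs_le.1 hI2).1, (abs_le.1 hI2).2, hWle, hM1, hM2,
        mul_le_mul_of_nonneg_left hWle hM1.le]
    · rw [min_eq_right h]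
      have habs : M₁ - M₂ ≤ |M₁ - M₂| := le_abs_self _
      nlinarith [(abs_le.1 hI1).1, (abs_le.1 hI1).2, hWle, hM1, hM2,
        mul_le_mul_of_nonneg_left hWle hM2.le]
  -- key lower-bound estimate
  have hkey : ∀ r ∈ SW, min M₁ M₂ * r ≤ 2 * s * sSup SF := by
    rintro r ⟨φ, hlip, rfl⟩
    obtain ⟨hint1, hJ1⟩ := shift_int_bound hν₁c hlip
    obtain ⟨hint2, hJ2⟩ := shift_int_bound hν₂c hlip
    rw [← hbdef] at hJ1 hJ2
    set c := φ ((k₁+k₂)/2) with hcdef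
    have e1 : ∫ x, max (-1) (min 1 ((φ x - c)/s)) ∂μ₁
        = (∫ x, φ x ∂μ₁ - M₁ * c)/s := by
      rw [hcdef, clamp_integral hs1 hlip (by rw [← hbdef]; exact hbs) hs1', ← hM₁def]
    have e2 : ∫ x, max (-1) (min 1 ((φ x - c)/s)) ∂μ₂
        = (∫ x, φ x ∂μ₂ - M₂ * c)/s := by
      rw [hcdef, clamp_integral hs2 hlip (by rw [← hbdef]; exact hbs) hs1', ← hM₂def]
    have hFle : (∫ x, φ x ∂μ₁ - M₁ * c)/s - (∫ x, φ x ∂μ₂ - M₂ * c)/s ≤ sSup SF := by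
      rw [← e1, ← e2]
      exact le_csSup hbddSF ⟨_, clamp_lipschitz hlip hs1', clamp_bound φ c s, rfl⟩
    rw [hconv1 φ, hconv2 φ, ← sub_div] at hFle
    have hkey2 : M₁ * (∫ x, φ x ∂ν₁ - c) - M₂ * (∫ x, φ x ∂ν₂ - c) ≤ s * sSup SF := by
      have := (div_le_iff₀ hspos).1 hFle
      nlinarith [this]
    rcases le_total M₁ M₂ with h | h
    · rw [min_eq_left h]
      have habs : M₂ - M₁ ≤ sSup SF := le_trans (by rw [abs_sub_comm]; exact le_abs_self _) hΔF
      nlinarith [mul_le_mul_of_nonneg_left (abs_le.1 hJ2).2 (sub_nonneg.2 h),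
        mul_le_mul_of_nonneg_right habs hb.le,
        mul_le_mul_of_nonneg_left hbs hF0, hkey2]
    · rw [min_eq_right h]
      have habs : M₁ - M₂ ≤ sSup SF := le_trans (le_abs_self _) hΔF
      nlinarith [mul_le_mul_of_nonneg_left (abs_le.1 hJ1).1 (sub_nonneg.2 h),
        mul_le_mul_of_nonneg_right habs hb.le,
        mul_le_mul_of_nonneg_left hbs hF0, hkey2]
  have hm : (0:ℝ) < min M₁ M₂ := lt_min hM1 hM2
  have hW1le : min M₁ M₂ * sSup SW ≤ 2 * s * sSup SF := by
    have h1 : sSup SW ≤ (2 * s * sSup SF)/(min M₁ M₂) := by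
      apply Real.sSup_le _ (div_nonneg (by positivity) hm.le)
      intro r hr
      rw [le_div_iff₀ hm]
      rw [mul_comm]
      exact hkey r hr
    calc min M₁ M₂ * sSup SW ≤ min M₁ M₂ * ((2 * s * sSup SF)/(min M₁ M₂)) :=
          mul_le_mul_of_nonneg_left h1 hm.le
      _ = 2 * s * sSup SF := by field_simp
  have hmins : min 1 (2/(k₂-k₁)) = 1/s := by
    rcases le_total (k₂ - k₁) 2 with h | h
    · rw [min_eq_left (by rw [le_div_iff₀ hL]; linarith),
        hsdef, max_eq_left (by rw [hbdef]; linarith)]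
      norm_num
    · rw [min_eq_right (by rw [div_le_one hL]; linarith),
        hsdef, max_eq_right (by rw [hbdef]; linarith), hbdef, one_div_div]
  refine ⟨?_, ?_, by rw [hFdef, hWdef]; exact hupper⟩
  · rw [hmins]; positivity
  · rw [hFdef, hWdef, hmins]
    have h3 : min M₁ M₂ * sSup SW + |M₁ - M₂| ≤ 3 * s * sSup SF := by
      nlinarith [hW1le, hΔF, mul_le_mul_of_nonneg_right hs1' hF0]
    calc (1/3) * (1/s) * (min M₁ M₂ * sSup SW + |M₁ - M₂|)
        ≤ (1/3) * (1/s) * (3 * s * sSup SF) :=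
          mul_le_mul_of_nonneg_left h3 (by positivity)
      _ = sSup SF := by field_simp
end

section
/- Let μ = Σ_{i=1}^{M} m_i δ_{x_i} be a purely atomic probability measure with support in a compact interval K = [k₁, k₂], and let R_m(μ) = Σ_{j=1}^{M̄} (1/M̄) δ_{x̃_j} be its fixed-equal-mass reconstruction, where x̃_j is the conditional mean of μ on the j-th quantile block of mass 1/M̄ (obtained by scanning the atoms in increasing order and splitting atoms at quantile boundaries). Then W₁(μ, R_m(μ)) ≤ |K|/M̄. -/
open MeasureTheory

/-- The (generalized inverse) quantile function of a measure on ℝ. -/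
noncomputable def quantile (μ : Measure ℝ) (t : ℝ) : ℝ :=
  sInf {x : ℝ | t ≤ (μ (Set.Iic x)).toReal}



open Set Filter Topology

section Aux

variable {μ : Measure ℝ} [IsProbabilityMeasure μ] {k₁ k₂ : ℝ}

lemma aux_cdf_mono {a b : ℝ} (hab : a ≤ b) :
    (μ (Iic a)).toReal ≤ (μ (Iic b)).toReal :=
  ENNReal.toReal_mono (measure_ne_top μ _) (measure_mono (Iic_subset_Iic.2 hab))

lemma aux_cdf_le_one (a : ℝ) : (μ (Iic a)).toReal ≤ 1 := by
  simpa using ENNReal.toReal_mono ENNReal.one_ne_top (prob_le_one (μ := μ) (s := Iic a))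

lemma aux_cdf_k₂ (hμ : μ (Icc k₁ k₂)ᶜ = 0) : (μ (Iic k₂)).toReal = 1 := by
  have h0 : μ (Iic k₂)ᶜ = 0 := by
    refine measure_mono_null ?_ hμ
    intro y hy
    simp only [mem_compl_iff, mem_Iic, not_le] at hy ⊢
    simp only [mem_Icc, not_and, not_le]
    intro _; linarith
  have := (prob_compl_eq_zero_iff₀ measurableSet_Iic.nullMeasurableSet).mp h0
  simp [this]

lemma aux_cdf_lt (hμ : μ (Icc k₁ k₂)ᶜ = 0) {y : ℝ} (hy : y < k₁) : μ (Iic y) = 0 := by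
  refine measure_mono_null ?_ hμ
  intro z hz
  simp only [mem_Iic] at hz
  simp only [mem_compl_iff, mem_Icc, not_and, not_le]
  intro h; linarith

lemma aux_mem (hμ : μ (Icc k₁ k₂)ᶜ = 0) {t : ℝ} (ht1 : t ≤ 1) :
    k₂ ∈ {x : ℝ | t ≤ (μ (Set.Iic x)).toReal} := by
  simp only [mem_setOf_eq, aux_cdf_k₂ hμ]; exact ht1

lemma aux_subset (hμ : μ (Icc k₁ k₂)ᶜ = 0) {t : ℝ} (ht : 0 < t) :
    {x : ℝ | t ≤ (μ (Set.Iic x)).toReal} ⊆ Ici k₁ := by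
  intro x hx
  by_contra h
  simp only [mem_Ici, not_le] at h
  have h0 := aux_cdf_lt hμ h
  simp only [mem_setOf_eq, h0, ENNReal.toReal_zero] at hx
  linarith

lemma quantile_le_k₂ (hμ : μ (Icc k₁ k₂)ᶜ = 0) {t : ℝ} (ht : 0 < t) (ht1 : t ≤ 1) :
    quantile μ t ≤ k₂ :=
  csInf_le ⟨k₁, fun _ hx => aux_subset hμ ht hx⟩ (aux_mem hμ ht1)

lemma k₁_le_quantile (hμ : μ (Icc k₁ k₂)ᶜ = 0) {t : ℝ} (ht : 0 < t) (ht1 : t ≤ 1) :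
    k₁ ≤ quantile μ t :=
  le_csInf ⟨k₂, aux_mem hμ ht1⟩ (fun _ hx => aux_subset hμ ht hx)

lemma quantile_mono (hμ : μ (Icc k₁ k₂)ᶜ = 0) {s t : ℝ} (hs : 0 < s) (hst : s ≤ t)
    (ht1 : t ≤ 1) : quantile μ s ≤ quantile μ t := by
  refine csInf_le_csInf ⟨k₁, fun _ hx => aux_subset hμ hs hx⟩ ⟨k₂, aux_mem hμ ht1⟩ ?_
  intro x hx
  exact le_trans hst hx

lemma le_cdf_quantile (hμ : μ (Icc k₁ k₂)ᶜ = 0) {t : ℝ} (ht : 0 < t) (ht1 : t ≤ 1) :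
    t ≤ (μ (Iic (quantile μ t))).toReal := by
  set q := quantile μ t with hq
  have hne : {x : ℝ | t ≤ (μ (Set.Iic x)).toReal}.Nonempty := ⟨k₂, aux_mem hμ ht1⟩
  have key : ∀ ε : ℝ, 0 < ε → ENNReal.ofReal t ≤ μ (Iic (q + ε)) := by
    intro ε hε
    obtain ⟨y, hy, hylt⟩ := exists_lt_of_csInf_lt hne (show sInf _ < q + ε by
      rw [hq]; unfold quantile; linarith [lt_add_of_pos_right q hε])
    have h2 : t ≤ (μ (Iic (q + ε))).toReal := le_trans hy (aux_cdf_mono hylt.le)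
    exact ENNReal.ofReal_le_of_le_toReal h2
  have hinter : (⋂ n : ℕ, Iic (q + 1 / (n + 1))) = Iic q := by
    ext y
    simp only [mem_iInter, mem_Iic]
    constructor
    · intro h
      refine le_of_forall_pos_le_add fun ε hε => ?_
      obtain ⟨n, hn⟩ := exists_nat_one_div_lt hε
      exact (h n).trans (by linarith)
    · intro h n
      have h1 : (0:ℝ) < 1 / (n + 1) := by positivity
      linarith
  have htend := tendsto_measure_iInter_atTop (μ := μ)
    (s := fun n : ℕ => Iic (q + 1 / (n + 1)))
    (fun _ => measurableSet_Iic.nullMeasurableSet)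
    (fun n m hnm => Iic_subset_Iic.2 (by
      have h1 : (n:ℝ) + 1 ≤ (m:ℝ) + 1 := by exact_mod_cast Nat.succ_le_succ hnm
      have h2 : (1:ℝ) / (m + 1) ≤ 1 / (n + 1) :=
        one_div_le_one_div_of_le (by positivity) h1
      linarith))
    ⟨0, measure_ne_top μ _⟩
  rw [hinter] at htend
  have hle : ENNReal.ofReal t ≤ μ (Iic q) :=
    ge_of_tendsto' htend fun n => key _ (by positivity)
  exact (ENNReal.ofReal_le_iff_le_toReal (measure_ne_top μ _)).mp hle

lemma quantile_le_iff (hμ : μ (Icc k₁ k₂)ᶜ = 0) {t x : ℝ} (ht : 0 < t) (ht1 : t ≤ 1) :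
    quantile μ t ≤ x ↔ t ≤ (μ (Iic x)).toReal := by
  constructor
  · intro h
    exact le_trans (le_cdf_quantile hμ ht ht1) (aux_cdf_mono h)
  · intro h
    exact csInf_le ⟨k₁, fun _ hy => aux_subset hμ ht hy⟩ h



noncomputable def Gfun (μ : Measure ℝ) (k₁ : ℝ) : ℝ → ℝ :=
  fun t => if t ≤ 0 then k₁ else quantile μ (min t 1)

lemma Gfun_eq {μ : Measure ℝ} {k₁ : ℝ} {t : ℝ} (ht : t ∈ Ioc (0:ℝ) 1) :
    Gfun μ k₁ t = quantile μ t := by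
  rw [Gfun, if_neg (not_le.2 ht.1), min_eq_left ht.2]

variable {μ : Measure ℝ} [IsProbabilityMeasure μ] {k₁ k₂ : ℝ}

lemma Gfun_mono (hμ : μ (Icc k₁ k₂)ᶜ = 0) : Monotone (Gfun μ k₁) := by
  intro a b hab
  unfold Gfun
  by_cases ha : a ≤ 0
  · rw [if_pos ha]
    by_cases hb : b ≤ 0
    · rw [if_pos hb]
    · rw [if_neg hb]
      push_neg at hb
      exact k₁_le_quantile hμ (lt_min hb one_pos) (min_le_right _ _)
  · push_neg at ha
    rw [if_neg (not_le.2 ha), if_neg (not_le.2 (lt_of_lt_of_le ha hab))]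
    exact quantile_mono hμ (lt_min ha one_pos) (min_le_min hab le_rfl) (min_le_right _ _)

lemma Gfun_mem (hμ : μ (Icc k₁ k₂)ᶜ = 0) (hk : k₁ ≤ k₂) (t : ℝ) :
    Gfun μ k₁ t ∈ Icc k₁ k₂ := by
  unfold Gfun
  by_cases ht : t ≤ 0
  · rw [if_pos ht]; exact ⟨le_rfl, hk⟩
  · push_neg at ht
    rw [if_neg (not_le.2 ht)]
    exact ⟨k₁_le_quantile hμ (lt_min ht one_pos) (min_le_right _ _),
      quantile_le_k₂ hμ (lt_min ht one_pos) (min_le_right _ _)⟩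

lemma Gfun_map (hμ : μ (Icc k₁ k₂)ᶜ = 0) :
    Measure.map (Gfun μ k₁) (volume.restrict (Ioc (0:ℝ) 1)) = μ := by
  have hGm : Measurable (Gfun μ k₁) := (Gfun_mono hμ).measurable
  haveI : IsFiniteMeasure (Measure.map (Gfun μ k₁) (volume.restrict (Ioc (0:ℝ) 1))) := by
    constructor
    rw [Measure.map_apply hGm MeasurableSet.univ, Set.preimage_univ,
      Measure.restrict_apply_univ]
    exact measure_Ioc_lt_top
  refine Measure.ext_of_Iic _ μ (fun a => ?_)
  rw [Measure.map_apply hGm measurableSet_Iic,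
    Measure.restrict_apply (hGm measurableSet_Iic)]
  have hset : Gfun μ k₁ ⁻¹' Iic a ∩ Ioc 0 1 = Ioc 0 ((μ (Iic a)).toReal) := by
    ext t
    simp only [mem_inter_iff, mem_preimage, mem_Iic, mem_Ioc]
    constructor
    · rintro ⟨hGa, ht0, ht1⟩
      refine ⟨ht0, ?_⟩
      rw [Gfun_eq ⟨ht0, ht1⟩] at hGa
      exact (quantile_le_iff hμ ht0 ht1).mp hGa
    · rintro ⟨ht0, htF⟩
      have ht1 : t ≤ 1 := le_trans htF (aux_cdf_le_one a)
      refine ⟨?_, ht0, ht1⟩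
      rw [Gfun_eq ⟨ht0, ht1⟩]
      exact (quantile_le_iff hμ ht0 ht1).mpr htF
  rw [hset, Real.volume_Ioc, sub_zero]
  exact ENNReal.ofReal_toReal (measure_ne_top μ _)

end Aux

/-- Fixed-equal-mass reconstruction error: for a purely atomic probability
measure μ supported in K = [k₁,k₂], the reconstruction placing mass 1/M̄ at
the barycenter of each quantile block of mass 1/M̄ satisfies
W₁(μ, R_m(μ)) ≤ |K|/M̄. -/
theorem fixedEqualMass_reconstruction_error (k₁ k₂ : ℝ) (hk : k₁ ≤ k₂)
    (μ : Measure ℝ) [IsProbabilityMeasure μ] (hμ : μ (Set.Icc k₁ k₂)ᶜ = 0)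
    (M : ℕ) (m : Fin M → ENNReal) (x : Fin M → ℝ)
    (hatom : μ = ∑ i, m i • Measure.dirac (x i))
    (Mb : ℕ) (hMb : 0 < Mb) :
    W1 μ (∑ j ∈ Finset.range Mb, ENNReal.ofReal (1 / (Mb : ℝ)) •
      Measure.dirac
        ((Mb : ℝ) * ∫ t in Set.Ioc ((j : ℝ) / Mb) (((j : ℝ) + 1) / Mb), quantile μ t)) ≤
      (k₂ - k₁) / Mb := by
  clear hatom
  have hMb' : (0:ℝ) < Mb := Nat.cast_pos.mpr hMb
  set G := Gfun μ k₁ with hGdef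
  have hGmono : Monotone G := Gfun_mono hμ
  have hGmeas : Measurable G := hGmono.measurable
  have hGmem : ∀ t, G t ∈ Set.Icc k₁ k₂ := Gfun_mem hμ hk
  have hmap : Measure.map G (volume.restrict (Set.Ioc 0 1)) = μ := Gfun_map hμ
  set xt : ℕ → ℝ :=
    fun j => (Mb : ℝ) * ∫ t in Set.Ioc ((j : ℝ) / Mb) (((j : ℝ) + 1) / Mb), quantile μ t
    with hxt
  set c : ℕ → ℝ := fun j => G ((j : ℝ) / Mb) with hc
  -- generic integrability facts
  haveI hfin : ∀ a b : ℝ, IsFiniteMeasure (volume.restrict (Set.Ioc a b)) := by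
    intro a b
    constructor
    rw [Measure.restrict_apply_univ]
    exact measure_Ioc_lt_top
  have hG_int : ∀ a b : ℝ, IntegrableOn G (Set.Ioc a b) volume := by
    intro a b
    haveI := hfin a b
    refine Integrable.mono' (integrable_const (|k₁| + |k₂|))
      hGmeas.aestronglyMeasurable ?_
    filter_upwards with t
    have h1 := hGmem t
    rw [Real.norm_eq_abs, abs_le]
    constructor
    · have := abs_nonneg k₂; have := neg_abs_le k₁; have := h1.1; linarith
    · have := abs_nonneg k₁; have := le_abs_self k₂; have := h1.2; linarith
  -- block facts
  have hple : ∀ j : ℕ, (j : ℝ) / Mb ≤ ((j : ℝ) + 1) / Mb := by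
    intro j; gcongr; linarith
  have hvol : ∀ j : ℕ,
      volume (Set.Ioc ((j : ℝ) / Mb) (((j : ℝ) + 1) / Mb)) = ENNReal.ofReal (1 / Mb) := by
    intro j
    rw [Real.volume_Ioc]
    congr 1
    field_simp
    ring
  have hvolR : ∀ j : ℕ,
      (volume (Set.Ioc ((j : ℝ) / Mb) (((j : ℝ) + 1) / Mb))).toReal = 1 / Mb := by
    intro j; rw [hvol j, ENNReal.toReal_ofReal (by positivity)]
  have hsub : ∀ j : ℕ, j < Mb →
      Set.Ioc ((j : ℝ) / Mb) (((j : ℝ) + 1) / Mb) ⊆ Set.Ioc (0:ℝ) 1 := by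
    intro j hj t ht
    have hj1 : (j : ℝ) + 1 ≤ Mb := by exact_mod_cast Nat.succ_le_of_lt hj
    have h0 : (0:ℝ) ≤ (j : ℝ) / Mb := by positivity
    have h1 : ((j : ℝ) + 1) / Mb ≤ 1 := by
      rw [div_le_one hMb']; exact hj1
    exact ⟨lt_of_le_of_lt h0 ht.1, le_trans ht.2 h1⟩
  have hcsucc : ∀ j : ℕ, c (j + 1) = G (((j : ℝ) + 1) / Mb) := by
    intro j; rw [hc]; push_cast; ring_nf
  have hGrange : ∀ j : ℕ, ∀ t ∈ Set.Ioc ((j : ℝ) / Mb) (((j : ℝ) + 1) / Mb),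
      c j ≤ G t ∧ G t ≤ c (j + 1) := by
    intro j t ht
    refine ⟨hGmono ht.1.le, ?_⟩
    rw [hcsucc j]
    exact hGmono ht.2
  -- xt in terms of G
  have hxtG : ∀ j : ℕ, j < Mb →
      xt j = (Mb : ℝ) * ∫ t in Set.Ioc ((j : ℝ) / Mb) (((j : ℝ) + 1) / Mb), G t := by
    intro j hj
    show (Mb : ℝ) * (∫ t in Set.Ioc ((j:ℝ)/Mb) (((j:ℝ)+1)/Mb), quantile μ t) = _
    congr 1
    exact setIntegral_congr_fun (μ := volume) (f := fun t => quantile μ t) (g := G)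
      measurableSet_Ioc (fun t ht => (Gfun_eq (hsub j hj ht)).symm)
  -- xt j lies in [c j, c (j+1)]
  have hxtmem : ∀ j : ℕ, j < Mb → c j ≤ xt j ∧ xt j ≤ c (j + 1) := by
    intro j hj
    have hlow : c j * (1 / Mb) ≤ ∫ t in Set.Ioc ((j:ℝ)/Mb) (((j:ℝ)+1)/Mb), G t := by
      have h := setIntegral_mono_on (μ := volume)
        (f := fun _ => c j) (g := G)
        ((integrableOn_const_iff).mpr (Or.inr (by rw [hvol j]; exact ENNReal.ofReal_lt_top)))
        (hG_int _ _) measurableSet_Ioc (fun t ht => (hGrange j t ht).1)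
      rwa [setIntegral_const, measureReal_def, hvolR j, smul_eq_mul, mul_comm] at h
    have hhigh : (∫ t in Set.Ioc ((j:ℝ)/Mb) (((j:ℝ)+1)/Mb), G t) ≤ c (j+1) * (1 / Mb) := by
      have h := setIntegral_mono_on (μ := volume)
        (f := G) (g := fun _ => c (j+1))
        (hG_int _ _)
        ((integrableOn_const_iff).mpr (Or.inr (by rw [hvol j]; exact ENNReal.ofReal_lt_top)))
        measurableSet_Ioc (fun t ht => (hGrange j t ht).2)
      rwa [setIntegral_const, measureReal_def, hvolR j, smul_eq_mul, mul_comm] at h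
    rw [hxtG j hj]
    constructor
    · have := mul_le_mul_of_nonneg_left hlow hMb'.le
      calc c j = (Mb : ℝ) * (c j * (1 / Mb)) := by field_simp
        _ ≤ _ := this
    · have := mul_le_mul_of_nonneg_left hhigh hMb'.le
      calc (Mb : ℝ) * ∫ t in Set.Ioc ((j:ℝ)/Mb) (((j:ℝ)+1)/Mb), G t
          ≤ (Mb : ℝ) * (c (j+1) * (1 / Mb)) := this
        _ = c (j + 1) := by field_simp
  -- start the sSup bound
  refine Real.sSup_le ?_ (div_nonneg (by linarith) hMb'.le)
  rintro r ⟨φ, hφ, rfl⟩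
  have hφcont : Continuous φ := hφ.continuous
  have hφG_int : ∀ a b : ℝ, IntegrableOn (fun t => φ (G t)) (Set.Ioc a b) volume := by
    intro a b
    haveI := hfin a b
    refine Integrable.mono' (integrable_const (|φ 0| + (|k₁| + |k₂|)))
      (hφcont.measurable.comp hGmeas).aestronglyMeasurable ?_
    filter_upwards with t
    have h1 := hGmem t
    have h2 : |G t| ≤ |k₁| + |k₂| := by
      rw [abs_le]
      constructor
      · have := abs_nonneg k₂; have := neg_abs_le k₁; have := h1.1; linarith
      · have := abs_nonneg k₁; have := le_abs_self k₂; have := h1.2; linarith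
    have h3 := hφ.dist_le_mul (G t) 0
    rw [Real.dist_eq, Real.dist_eq] at h3
    simp only [NNReal.coe_one, one_mul, sub_zero] at h3
    rw [Real.norm_eq_abs]
    calc |φ (G t)| ≤ |φ (G t) - φ 0| + |φ 0| := by
          have := abs_sub_abs_le_abs_sub (φ (G t)) (φ 0); linarith [abs_abs (φ 0)]
      _ ≤ |φ 0| + (|k₁| + |k₂|) := by linarith
  -- integral against μ via transport
  have h1 : ∫ y, φ y ∂μ = ∫ t in Set.Ioc (0:ℝ) 1, φ (G t) := by
    rw [← hmap, integral_map hGmeas.aemeasurable hφcont.aestronglyMeasurable]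
  -- split into blocks
  have h2 : ∫ t in Set.Ioc (0:ℝ) 1, φ (G t) =
      ∑ j ∈ Finset.range Mb,
        ∫ t in Set.Ioc ((j : ℝ) / Mb) (((j : ℝ) + 1) / Mb), φ (G t) := by
    have hint : ∀ k, k < Mb → IntervalIntegrable (fun t => φ (G t)) volume
        ((k : ℝ) / Mb) (((k + 1 : ℕ) : ℝ) / Mb) := by
      intro k _
      rw [intervalIntegrable_iff_integrableOn_Ioc_of_le (by push_cast; exact hple k)]
      exact hφG_int _ _
    have hsum := intervalIntegral.sum_integral_adjacent_intervals
      (f := fun t => φ (G t)) (μ := volume) (a := fun k => (k : ℝ) / Mb) (n := Mb) hint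
    have e0 : ((0 : ℕ) : ℝ) / Mb = 0 := by simp
    have e1 : ((Mb : ℕ) : ℝ) / Mb = 1 := by field_simp
    rw [e0, e1] at hsum
    rw [← intervalIntegral.integral_of_le (zero_le_one), ← hsum]
    refine Finset.sum_congr rfl (fun j hj => ?_)
    rw [intervalIntegral.integral_of_le (by push_cast; exact hple j)]
    push_cast
    rfl
  -- integral against the reconstruction
  have h3 : ∫ y, φ y ∂(∑ j ∈ Finset.range Mb, ENNReal.ofReal (1 / (Mb : ℝ)) •
        Measure.dirac (xt j)) =
      ∑ j ∈ Finset.range Mb, (1 / (Mb : ℝ)) * φ (xt j) := by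
    rw [integral_finset_sum_measure (fun j _ => ?_)]
    · refine Finset.sum_congr rfl (fun j hj => ?_)
      rw [integral_smul_measure, integral_dirac, ENNReal.toReal_ofReal (by positivity),
        smul_eq_mul]
    · refine Integrable.smul_measure ?_ ENNReal.ofReal_ne_top
      refine (integrable_const (φ (xt j))).congr ?_
      rw [Filter.EventuallyEq, ae_dirac_eq]
      exact Filter.eventually_pure.mpr rfl
  rw [h1, h2, h3, ← Finset.sum_sub_distrib]
  -- blockwise bound
  have hblock : ∀ j ∈ Finset.range Mb,
      (∫ t in Set.Ioc ((j : ℝ) / Mb) (((j : ℝ) + 1) / Mb), φ (G t)) -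
        (1 / (Mb : ℝ)) * φ (xt j) ≤ (c (j + 1) - c j) * (1 / Mb) := by
    intro j hj
    have hjlt := Finset.mem_range.mp hj
    have hconst : (1 / (Mb : ℝ)) * φ (xt j) =
        ∫ _ in Set.Ioc ((j : ℝ) / Mb) (((j : ℝ) + 1) / Mb), φ (xt j) := by
      rw [setIntegral_const, measureReal_def, hvolR j, smul_eq_mul]
    have hcint : IntegrableOn (fun _ : ℝ => φ (xt j))
        (Set.Ioc ((j : ℝ) / Mb) (((j : ℝ) + 1) / Mb)) volume :=
      (integrableOn_const_iff).mpr (Or.inr (by rw [hvol j]; exact ENNReal.ofReal_lt_top))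
    rw [hconst, ← integral_sub (hφG_int _ _) hcint]
    have hmono := setIntegral_mono_on (μ := volume)
      (f := fun t => φ (G t) - φ (xt j)) (g := fun _ => c (j + 1) - c j)
      ((hφG_int _ _).sub hcint)
      ((integrableOn_const_iff).mpr (Or.inr (by rw [hvol j]; exact ENNReal.ofReal_lt_top)))
      measurableSet_Ioc ?_
    · calc _ ≤ _ := hmono
        _ = (c (j + 1) - c j) * (1 / Mb) := by
          rw [setIntegral_const, measureReal_def, hvolR j, smul_eq_mul, mul_comm]
    · intro t ht
      show φ (G t) - φ (xt j) ≤ c (j + 1) - c j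
      have hd := hφ.dist_le_mul (G t) (xt j)
      rw [Real.dist_eq, Real.dist_eq] at hd
      simp only [NNReal.coe_one, one_mul] at hd
      have hr := hGrange j t ht
      have hx := hxtmem j hjlt
      have habs : |G t - xt j| ≤ c (j + 1) - c j := by
        rw [abs_le]
        constructor <;> linarith
      calc φ (G t) - φ (xt j) ≤ |φ (G t) - φ (xt j)| := le_abs_self _
        _ ≤ |G t - xt j| := hd
        _ ≤ c (j + 1) - c j := habs
  calc ∑ j ∈ Finset.range Mb,
        ((∫ t in Set.Ioc ((j : ℝ) / Mb) (((j : ℝ) + 1) / Mb), φ (G t)) -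
          (1 / (Mb : ℝ)) * φ (xt j))
      ≤ ∑ j ∈ Finset.range Mb, (c (j + 1) - c j) * (1 / Mb) :=
        Finset.sum_le_sum hblock
    _ = (c Mb - c 0) * (1 / Mb) := by
        rw [← Finset.sum_mul, Finset.sum_range_sub]
    _ ≤ (k₂ - k₁) / Mb := by
        have hc0 : c 0 = k₁ := by
          show G (((0:ℕ) : ℝ) / Mb) = k₁
          simp only [Nat.cast_zero, zero_div]
          rw [hGdef]
          simp [Gfun]
        have hcMb : c Mb ≤ k₂ := by
          show G (((Mb:ℕ) : ℝ) / Mb) ≤ k₂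
          have e1 : ((Mb : ℕ) : ℝ) / Mb = 1 := by field_simp
          rw [e1]
          exact (hGmem 1).2
        have h0 : (0:ℝ) ≤ 1 / Mb := by positivity
        have hd : c Mb - c 0 ≤ k₂ - k₁ := by rw [hc0]; linarith
        calc (c Mb - c 0) * (1 / Mb) ≤ (k₂ - k₁) * (1 / Mb) :=
              mul_le_mul_of_nonneg_right hd h0
          _ = (k₂ - k₁) / Mb := mul_one_div _ _
end
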